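/- Let n ≥ 1 and let v_1,…,v_n ∈ [0,1) be stratified, i.e., for every k = 1,…,n the interval [(k−1)/n, k/n) contains exactly one of the points v_1,…,v_n. Let [A,B) ⊆ [0,1) with β = B − A, and let n_* be the number of indices i with v_i ∈ [A,B). Then ⌈nβ⌉ − 2 ≤ n_* ≤ ⌊nβ⌋ + 2. -/

import Mathlib

open scoped Classical

/-- A list of points `v 0, …, v (n-1)` in `[0,1)` is *stratified* if each interval
`[k/n, (k+1)/n)`, `k = 0, …, n-1`, contains exactly one of the points. -/
def Stratified (n : ℕ) (v : Fin n → ℝ) : Prop :=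
  ∀ k : Fin n, ∃! i : Fin n, (k : ℝ) / n ≤ v i ∧ v i < ((k : ℝ) + 1) / n

theorem stratified_count_interval
    (n : ℕ) (hn : 1 ≤ n) (v : Fin n → ℝ)
    (hv : ∀ i, 0 ≤ v i ∧ v i < 1)
    (hstrat : Stratified n v)
    (A B : ℝ) (hA : 0 ≤ A) (hAB : A ≤ B) (hB : B ≤ 1) :
    let β : ℝ := B - A
    let nstar : ℕ := (Finset.univ.filter (fun i : Fin n => A ≤ v i ∧ v i < B)).card
    ⌈(n : ℝ) * β⌉ - 2 ≤ (nstar : ℤ) ∧ (nstar : ℤ) ≤ ⌊(n : ℝ) * β⌋ + 2 := by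
  intro β nstar
  have hn0 : (0:ℝ) < (n:ℝ) := by
    have : 0 < n := hn
    exact_mod_cast this
  -- the interval index of each point
  have hfl0 : ∀ i, 0 ≤ ⌊(n:ℝ) * v i⌋ := fun i =>
    Int.floor_nonneg.mpr (by have := (hv i).1; positivity)
  have hidxlt : ∀ i : Fin n, (⌊(n:ℝ) * v i⌋).toNat < n := by
    intro i
    have h2 : (n:ℝ) * v i < n := by
      have := (hv i).2; nlinarith
    have hlt : ⌊(n:ℝ) * v i⌋ < (n:ℤ) := Int.floor_lt.mpr (by exact_mod_cast h2)
    have := hfl0 i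
    omega
  set idx : Fin n → Fin n := fun i => ⟨(⌊(n:ℝ) * v i⌋).toNat, hidxlt i⟩ with hidxdef
  have hcast : ∀ i, ((idx i : ℕ) : ℝ) = (⌊(n:ℝ) * v i⌋ : ℝ) := by
    intro i
    have h := Int.toNat_of_nonneg (hfl0 i)
    simp only [hidxdef]
    exact_mod_cast congrArg (fun z : ℤ => (z:ℝ)) h
  have hmem : ∀ i, ((idx i : ℕ) : ℝ)/n ≤ v i ∧ v i < (((idx i : ℕ) : ℝ)+1)/n := by
    intro i
    rw [hcast i]
    constructor
    · rw [div_le_iff₀ hn0]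
      have := Int.floor_le ((n:ℝ) * v i)
      linarith [this]
    · rw [lt_div_iff₀ hn0]
      have := Int.lt_floor_add_one ((n:ℝ) * v i)
      linarith [this]
  -- points in interval k have idx = k
  have hfloor : ∀ (k : Fin n) (i : Fin n),
      ((k:ℕ):ℝ)/n ≤ v i → v i < (((k:ℕ):ℝ)+1)/n → idx i = k := by
    intro k i h1 h2
    have hk1 : ((k:ℕ):ℝ) ≤ (n:ℝ) * v i := by
      rw [div_le_iff₀ hn0] at h1; linarith
    have hk2 : (n:ℝ) * v i < ((k:ℕ):ℝ) + 1 := by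
      rw [lt_div_iff₀ hn0] at h2; linarith
    have : ⌊(n:ℝ) * v i⌋ = ((k:ℕ):ℤ) := by
      rw [Int.floor_eq_iff]
      constructor <;> push_cast <;> linarith
    apply Fin.ext
    simp [hidxdef, this]
  have hinj : ∀ i j : Fin n, idx i = idx j → i = j := by
    intro i j h
    have hu := hstrat (idx j)
    have hi := hmem i
    rw [h] at hi
    exact hu.unique hi (hmem j)
  -- target set
  set T : Finset (Fin n) := Finset.univ.filter (fun i : Fin n => A ≤ v i ∧ v i < B) with hT
  -- integer abbreviations
  set a : ℤ := ⌈(n:ℝ) * A⌉ with ha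
  set b : ℤ := ⌊(n:ℝ) * B⌋ with hb
  set a' : ℤ := ⌊(n:ℝ) * A⌋ with ha'
  set b' : ℤ := ⌈(n:ℝ) * B⌉ with hb'
  have ha0 : 0 ≤ a := Int.ceil_nonneg (by positivity)
  have ha'0 : 0 ≤ a' := Int.floor_nonneg.mpr (by positivity)
  have hbn : b ≤ (n:ℤ) := by
    have h : (n:ℝ) * B ≤ ((n:ℤ):ℝ) := by push_cast; nlinarith
    exact (Int.floor_le_floor h).trans_eq (Int.floor_intCast n)
  constructor
  · -- lower bound
    set S : Finset (Fin n) :=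
      Finset.univ.filter (fun k : Fin n => A ≤ ((k:ℕ):ℝ)/n ∧ (((k:ℕ):ℝ)+1)/n ≤ B) with hS
    -- S.card ≤ T.card
    have hST : S.card ≤ T.card := by
      have hg : ∀ k : Fin n, ∃ i, ((k:ℕ):ℝ)/n ≤ v i ∧ v i < (((k:ℕ):ℝ)+1)/n :=
        fun k => (hstrat k).exists
      choose g hg1 hg2 using hg
      apply Finset.card_le_card_of_injOn g
      · intro k hk
        simp only [Finset.mem_coe, hS, Finset.mem_filter] at hk
        simp only [Finset.mem_coe, hT, Finset.mem_filter]
        exact ⟨Finset.mem_univ _, le_trans hk.2.1 (hg1 k), lt_of_lt_of_le (hg2 k) hk.2.2⟩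
      · intro k hk k' hk' hgg
        have e1 : idx (g k) = k := hfloor k _ (hg1 k) (hg2 k)
        have e2 : idx (g k') = k' := hfloor k' _ (hg1 k') (hg2 k')
        rw [← e1, ← e2, hgg]
    -- Ico a.toNat b.toNat injects into S
    have hIco : (Finset.Ico a.toNat b.toNat).card ≤ S.card := by
      apply Finset.card_le_card_of_injOn
        (fun k => if h : k < n then (⟨k, h⟩ : Fin n) else ⟨0, by omega⟩)
      · intro k hk
        simp only [Finset.mem_coe, Finset.mem_Ico] at hk
        have hkb : (k:ℤ) < b := by omega
        have hka : a ≤ (k:ℤ) := by omega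
        have hklt : k < n := by omega
        simp only [Finset.mem_coe, hS, Finset.mem_filter, dif_pos hklt]
        refine ⟨Finset.mem_univ _, ?_, ?_⟩
        · rw [le_div_iff₀ hn0]
          have : (n:ℝ) * A ≤ ((k:ℕ):ℝ) := by
            calc (n:ℝ) * A ≤ (a:ℝ) := Int.le_ceil _
            _ ≤ ((k:ℤ):ℝ) := by exact_mod_cast hka
            _ = ((k:ℕ):ℝ) := by push_cast; ring
          linarith
        · rw [div_le_iff₀ hn0]
          have : ((k:ℕ):ℝ) + 1 ≤ (n:ℝ) * B := by
            have h1 : (k:ℤ) + 1 ≤ b := by omega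
            calc ((k:ℕ):ℝ) + 1 = (((k:ℤ) + 1 : ℤ):ℝ) := by push_cast; ring
            _ ≤ (b:ℝ) := by exact_mod_cast h1
            _ ≤ (n:ℝ) * B := Int.floor_le _
          linarith
      · intro x hx y hy hxy
        simp only [Finset.coe_Ico, Set.mem_Ico] at hx hy
        have hxn : x < n := by omega
        have hyn : y < n := by omega
        simp only [dif_pos hxn, dif_pos hyn, Fin.mk.injEq] at hxy
        exact hxy
    have hcard : (Finset.Ico a.toNat b.toNat).card = b.toNat - a.toNat := Nat.card_Ico _ _
    have hceil : ⌈(n:ℝ) * β⌉ ≤ b - a + 2 := by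
      apply Int.ceil_le.mpr
      push_cast
      have h1 : (n:ℝ) * B - 1 ≤ (b:ℝ) := by
        have := Int.lt_floor_add_one ((n:ℝ) * B); linarith
      have h2 : (a:ℝ) ≤ (n:ℝ) * A + 1 := by
        have := Int.ceil_lt_add_one ((n:ℝ) * A); linarith
      have : (n:ℝ) * β = (n:ℝ) * B - (n:ℝ) * A := by simp [β]; ring
      linarith
    have h1 : (b.toNat - a.toNat : ℕ) ≤ nstar := hcard ▸ (hIco.trans hST)
    have h2 : ((b.toNat - a.toNat : ℕ) : ℤ) ≤ (nstar : ℤ) := by exact_mod_cast h1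
    omega
  · -- upper bound
    set U : Finset (Fin n) :=
      Finset.univ.filter (fun k : Fin n => ((k:ℕ):ℝ)/n < B ∧ A < (((k:ℕ):ℝ)+1)/n) with hU
    have hTU : T.card ≤ U.card := by
      apply Finset.card_le_card_of_injOn idx
      · intro i hi
        simp only [Finset.mem_coe, hT, Finset.mem_filter] at hi
        have hm := hmem i
        simp only [Finset.mem_coe, hU, Finset.mem_filter]
        exact ⟨Finset.mem_univ _, lt_of_le_of_lt hm.1 hi.2.2,
          lt_of_le_of_lt hi.2.1 hm.2⟩
      · intro i _ j _ h
        exact hinj i j h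
    have hUIco : U.card ≤ (Finset.Ico a'.toNat b'.toNat).card := by
      apply Finset.card_le_card_of_injOn (fun k : Fin n => (k : ℕ))
      · intro k hk
        simp only [Finset.mem_coe, hU, Finset.mem_filter] at hk
        have h1 : ((k:ℕ):ℤ) < b' := by
          apply Int.lt_ceil.mpr
          have := hk.2.1
          rw [div_lt_iff₀ hn0] at this
          push_cast
          linarith
        have h2 : a' ≤ ((k:ℕ):ℤ) := by
          have h3 : a' < ((k:ℕ):ℤ) + 1 := by
            apply Int.floor_lt.mpr
            have := hk.2.2
            rw [lt_div_iff₀ hn0] at this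
            push_cast
            linarith
          omega
        simp only [Finset.mem_coe, Finset.mem_Ico]
        omega
      · intro x _ y _ h
        exact Fin.ext h
    have hcard : (Finset.Ico a'.toNat b'.toNat).card = b'.toNat - a'.toNat := Nat.card_Ico _ _
    have hfloor2 : b' - a' - 2 ≤ ⌊(n:ℝ) * β⌋ := by
      apply Int.le_floor.mpr
      push_cast
      have h1 : (b':ℝ) ≤ (n:ℝ) * B + 1 := by
        have := Int.ceil_lt_add_one ((n:ℝ) * B); linarith
      have h2 : (n:ℝ) * A - 1 ≤ (a':ℝ) := by
        have := Int.floor_le ((n:ℝ) * A)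
        have := Int.lt_floor_add_one ((n:ℝ) * A)
        linarith
      have : (n:ℝ) * β = (n:ℝ) * B - (n:ℝ) * A := by simp [β]; ring
      linarith
    have h1 : nstar ≤ (b'.toNat - a'.toNat : ℕ) := hcard ▸ (hTU.trans hUIco)
    have h2 : (nstar : ℤ) ≤ ((b'.toNat - a'.toNat : ℕ) : ℤ) := by exact_mod_cast h1
    have hnT : (nstar : ℤ) = (T.card : ℤ) := rfl
    have hβ0 : 0 ≤ ⌊(n:ℝ) * β⌋ := Int.floor_nonneg.mpr (by
      have : (0:ℝ) ≤ B - A := by linarith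
      have hb0 : (n:ℝ) * β = (n:ℝ) * (B - A) := rfl
      nlinarith)
    omega
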